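/- Let h0 and h1 be integrable real random variables with h1 ≤ h0 almost surely, and define m(s) := E[min(h0, max(h1, s))] for s ∈ ℝ. If P(h0 = k) = 0 and P(h1 = k) = 0, then m is differentiable at k with m'(k) = P(h1 ≤ k ≤ h0). -/

import Mathlib

open MeasureTheory

/-- Item 2 of the paper's Theorem 2 (marginal version): with `h1 ≤ h0` a.s. and
`m(s) = E[min(h0, max(h1, s))]` the average observed hours when the kink is at
`s`, if `P(h0 = k) = P(h1 = k) = 0` then `m` is differentiable at `k` with
derivative equal to the bunching probability `P(h1 ≤ k ≤ h0)`. -/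
theorem stmt14 {Ω : Type*} [MeasurableSpace Ω] (μ : Measure Ω)
    [IsProbabilityMeasure μ]
    (h0 h1 : Ω → ℝ) (hm0 : Measurable h0) (hm1 : Measurable h1)
    (hi0 : Integrable h0 μ) (hi1 : Integrable h1 μ)
    (hle : ∀ᵐ ω ∂μ, h1 ω ≤ h0 ω) (k : ℝ)
    (hk0 : μ {ω | h0 ω = k} = 0) (hk1 : μ {ω | h1 ω = k} = 0)
    (m : ℝ → ℝ) (hm : m = fun s => ∫ ω, min (h0 ω) (max (h1 ω) s) ∂μ) :
    HasDerivAt m ((μ {ω | h1 ω ≤ k ∧ k ≤ h0 ω}).toReal) k := by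
  subst hm
  have hne0 : ∀ᵐ ω ∂μ, h0 ω ≠ k := by
    rw [ae_iff]; simpa using hk0
  have hne1 : ∀ᵐ ω ∂μ, h1 ω ≠ k := by
    rw [ae_iff]; simpa using hk1
  set S : Set Ω := {ω | h1 ω ≤ k ∧ k ≤ h0 ω} with hSdef
  have hS : MeasurableSet S :=
    (measurableSet_le hm1 measurable_const).inter (measurableSet_le measurable_const hm0)
  have key : HasDerivAt (fun s => ∫ ω, min (h0 ω) (max (h1 ω) s) ∂μ)
      (∫ ω, S.indicator (fun _ => (1:ℝ)) ω ∂μ) k := by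
    refine (hasDerivAt_integral_of_dominated_loc_of_lip
      (bound := fun _ => (1:ℝ)) (s := Set.univ) Filter.univ_mem ?_ ?_ ?_ ?_ ?_ ?_).2
    · filter_upwards with x
      exact (hm0.min (hm1.max measurable_const)).aestronglyMeasurable
    · -- integrability of F k
      apply (hi0.abs.add (hi1.abs.add (integrable_const |k|))).mono'
        (hm0.min (hm1.max measurable_const)).aestronglyMeasurable
      filter_upwards with ω
      have ha := abs_nonneg (h0 ω); have hb := abs_nonneg (h1 ω)
      have h1a := neg_abs_le (h0 ω); have h1b := neg_abs_le (h1 ω)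
      have h1c := neg_abs_le k
      have h2a := le_abs_self (h0 ω); have h2b := le_abs_self (h1 ω)
      have h2c := le_abs_self k
      rw [Real.norm_eq_abs, abs_le]
      simp only [Pi.add_apply]
      constructor
      · rcases le_total (h0 ω) (max (h1 ω) k) with h | h
        · rw [min_eq_left h]; linarith [abs_nonneg k]
        · rw [min_eq_right h]
          rcases le_total (h1 ω) k with h' | h' <;>
            simp [max_def, h'] <;> linarith
      · calc min (h0 ω) (max (h1 ω) k) ≤ h0 ω := min_le_left _ _
          _ ≤ _ := by linarith [abs_nonneg k]
    · exact ((measurable_one.indicator hS).aestronglyMeasurable)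
    · filter_upwards with ω
      have : LipschitzWith 1 (fun x => min (h0 ω) (max (h1 ω) x)) := by
        have hmax : LipschitzWith 1 (fun x : ℝ => max (h1 ω) x) := by
          have := (LipschitzWith.const (h1 ω)).max (LipschitzWith.id (α := ℝ))
          simpa using this
        have := (LipschitzWith.const (h0 ω)).min hmax
        simpa using this
      have h1 : Real.nnabs (1:ℝ) = 1 := by simp
      rw [h1]
      exact this.lipschitzOnWith
    · exact integrable_const 1
    · filter_upwards [hle, hne0, hne1] with ω hωle hω0 hω1
      rcases lt_or_gt_of_ne hω0 with hlt0 | hgt0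
      · -- h0 ω < k : locally constant, indicator = 0
        have hind : S.indicator (fun _ => (1:ℝ)) ω = 0 := by
          apply Set.indicator_of_notMem
          simp only [hSdef, Set.mem_setOf_eq, not_and]
          intro _; linarith
        rw [hind]
        apply (hasDerivAt_const k (h0 ω)).congr_of_eventuallyEq
        have : Set.Ioi (h0 ω) ∈ nhds k := Ioi_mem_nhds hlt0
        filter_upwards [this] with x hx
        have : h0 ω ≤ max (h1 ω) x := le_trans (le_of_lt hx) (le_max_right _ _)
        simp [min_eq_left this]
      · rcases lt_or_gt_of_ne hω1 with hlt1 | hgt1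
        · -- h1 ω < k < h0 ω : locally identity, indicator = 1
          have hind : S.indicator (fun _ => (1:ℝ)) ω = 1 := by
            apply Set.indicator_of_mem
            exact ⟨le_of_lt hlt1, le_of_lt hgt0⟩
          rw [hind]
          apply (hasDerivAt_id k).congr_of_eventuallyEq
          have : Set.Ioo (h1 ω) (h0 ω) ∈ nhds k := Ioo_mem_nhds hlt1 hgt0
          filter_upwards [this] with x hx
          simp [max_eq_right hx.1.le, min_eq_right hx.2.le]
        · -- k < h1 ω : locally constant h1, indicator = 0
          have hind : S.indicator (fun _ => (1:ℝ)) ω = 0 := by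
            apply Set.indicator_of_notMem
            simp only [hSdef, Set.mem_setOf_eq, not_and]
            intro h; linarith
          rw [hind]
          apply (hasDerivAt_const k (h1 ω)).congr_of_eventuallyEq
          have : Set.Iio (h1 ω) ∈ nhds k := Iio_mem_nhds hgt1
          filter_upwards [this] with x hx
          rw [max_eq_left (le_of_lt hx), min_eq_right hωle]
  convert key using 1
  rw [integral_indicator_const _ hS]
  simp
  rfl
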